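/- arXiv:1304.5352 — 2 statements merged into one kernel-verified Lean document; each statement's English description precedes it below -/
import Mathlib

section
/- Let G be a finite group, p a prime dividing the order of G, and φ a fixed-point-free automorphism of G. Then there exists exactly one Sylow p-subgroup S of G with φ(S) = S. -/
/-- In a finite group with a fixed-point-free automorphism `φ`, every element of a
`φ`-invariant subgroup `H` has the form `m⁻¹ * φ m` with `m ∈ H`. -/
lemma fpf_surj_aux {G : Type*} [Group G] [Finite G] (φ : MulAut G)
    (hfpf : ∀ g : G, φ g = g → g = 1) (H : Subgroup G) (hH : ∀ x ∈ H, φ x ∈ H) :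
    ∀ n ∈ H, ∃ m ∈ H, m⁻¹ * φ m = n := by
  have hf : Function.Surjective
      (fun m : H => (⟨(m : G)⁻¹ * φ m, H.mul_mem (H.inv_mem m.2) (hH m m.2)⟩ : H)) := by
    apply Finite.surjective_of_injective
    intro a b hab
    have h : (a : G)⁻¹ * φ a = (b : G)⁻¹ * φ b := congrArg Subtype.val hab
    have : φ ((b : G) * (a : G)⁻¹) = (b : G) * (a : G)⁻¹ := by
      have := congrArg (fun x => (b : G) * x * (φ (a : G))⁻¹) h
      simpa [map_mul, map_inv, mul_assoc] using this.symm
    have := hfpf _ this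
    have : (b : G) = a := by
      have := congrArg (fun x => x * (a : G)) this
      simpa using this
    exact Subtype.ext this.symm
  intro n hn
  obtain ⟨m, hm⟩ := hf ⟨n, hn⟩
  exact ⟨m, m.2, congrArg Subtype.val hm⟩

/-- If `φ` is a fixed-point-free automorphism of a finite group `G` and `p`
is a prime dividing the order of `G`, then there is exactly one
`φ`-invariant Sylow `p`-subgroup of `G`. -/
theorem existsUnique_invariant_sylow (G : Type*) [Group G] [Finite G]
    (p : ℕ) [Fact p.Prime] (hdvd : p ∣ Nat.card G)
    (φ : MulAut G) (hfpf : ∀ g : G, φ g = g → g = 1) :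
    ∃! S : Sylow p G, (S : Subgroup G).map (φ : G ≃* G).toMonoidHom = S := by
  have hsurj : Function.Surjective ((φ : G ≃* G).toMonoidHom : G →* G) := φ.surjective
  set Φ : Sylow p G → Sylow p G := fun S => Sylow.mapSurjective hsurj S with hΦdef
  have hΦ : ∀ S : Sylow p G,
      ((Φ S : Sylow p G) : Subgroup G) = (S : Subgroup G).map (φ : G ≃* G).toMonoidHom :=
    fun S => rfl
  have hmem : ∀ (S : Sylow p G) (x : G), x ∈ Φ S ↔ φ.symm x ∈ S := by
    intro S x
    have h := Subgroup.mem_map_equiv (f := (φ : G ≃* G)) (K := (S : Subgroup G)) (x := x)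
    rw [← hΦ S] at h
    exact h
  have hmem_smul : ∀ (S : Sylow p G) (g x : G), x ∈ (g • S : Sylow p G) ↔ g⁻¹ * x * g ∈ S := by
    intro S g x
    have h := Subgroup.mem_pointwise_smul_iff_inv_smul_mem
      (a := MulAut.conj g) (S := (S : Subgroup G)) (x := x)
    rw [← Sylow.coe_subgroup_smul] at h
    simp [MulAut.smul_def] at h; exact h
  -- Φ commutes with conjugation accordingly
  have hconj : ∀ (g : G) (S : Sylow p G), Φ (g • S) = (φ g) • Φ S := by
    intro g S
    apply Sylow.ext
    ext x
    show x ∈ Φ (g • S) ↔ x ∈ ((φ g) • Φ S : Sylow p G)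
    rw [hmem, hmem_smul, hmem_smul, hmem]
    have : φ.symm ((φ g)⁻¹ * x * φ g) = g⁻¹ * φ.symm x * g := by
      simp [map_mul]
    rw [this]
  -- Existence
  obtain ⟨S₀⟩ : Nonempty (Sylow p G) := Sylow.nonempty
  obtain ⟨g, hg⟩ := MulAction.exists_smul_eq G S₀ (Φ S₀)
  obtain ⟨u, -, hu⟩ := fpf_surj_aux φ hfpf ⊤ (fun x _ => trivial) g⁻¹ trivial
  have hexists : Φ (u • S₀) = u • S₀ := by
    rw [hconj]
    have : φ u = u * g⁻¹ := by
      have := congrArg (fun x => u * x) hu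
      simpa [mul_assoc] using this
    rw [← hg, this, smul_smul]
    congr 1
    group
  -- Uniqueness
  have huniq : ∀ S Q : Sylow p G, Φ S = S → Φ Q = Q → Q = S := by
    intro S Q hS hQ
    obtain ⟨g, hg⟩ := MulAction.exists_smul_eq G S Q
    have hn : g⁻¹ * φ g ∈ Subgroup.normalizer (S : Set G) := by
      rw [← Sylow.smul_eq_iff_mem_normalizer]
      have : Φ (g • S) = g • S := by rw [hg, hQ]
      rw [hconj, hS] at this
      calc (g⁻¹ * φ g) • S = g⁻¹ • (φ g) • S := by rw [smul_smul]
        _ = g⁻¹ • g • S := by rw [this, hg, ← hg]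
        _ = S := by rw [smul_smul]; simp
    have hNinv : ∀ x ∈ Subgroup.normalizer ((S : Subgroup G) : Set G), φ x ∈ Subgroup.normalizer ((S : Subgroup G) : Set G) := by
      intro x hx
      rw [Subgroup.mem_normalizer_iff] at hx ⊢
      intro h
      have hSmem : ∀ y : G, y ∈ (S : Subgroup G) ↔ φ.symm y ∈ (S : Subgroup G) := by
        intro y
        have := hS
        apply Sylow.ext_iff.mp at this
        conv_lhs => rw [← this]
        exact (hmem S y)
      rw [hSmem h, hSmem (φ x * h * (φ x)⁻¹)]
      have : φ.symm (φ x * h * (φ x)⁻¹) = x * φ.symm h * x⁻¹ := by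
        simp [map_mul, map_inv]
      rw [this]
      exact hx (φ.symm h)
    obtain ⟨m, hmN, hm⟩ := fpf_surj_aux φ hfpf _ hNinv _ hn
    have hgm : φ (g * m⁻¹) = g * m⁻¹ := by
      have h1 : φ g = g * (m⁻¹ * φ m) := by
        rw [hm]; group
      rw [map_mul, map_inv, h1]
      group
    have : g * m⁻¹ = 1 := hfpf _ hgm
    have hgmem : g ∈ Subgroup.normalizer ((S : Subgroup G) : Set G) := by
      have : g = m := by
        have := congrArg (fun x => x * m) this
        simpa using this
      rwa [this]
    rw [← hg, Sylow.smul_eq_iff_mem_normalizer.mpr hgmem]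
  refine ⟨u • S₀, ?_, ?_⟩
  · show ((u • S₀ : Sylow p G) : Subgroup G).map (φ : G ≃* G).toMonoidHom = ↑(u • S₀)
    rw [← hΦ (u • S₀), hexists]
  · intro Q hQ
    refine huniq (u • S₀) Q hexists ?_
    apply Sylow.ext
    rw [hΦ Q, hQ]
end

section
/- Let G be a finite group, p a prime, and φ a fixed-point-free automorphism of G. If S is the unique Sylow p-subgroup of G with φ(S) = S, then every p-subgroup P of G satisfying φ(P) = P is contained in S. -/
set_option linter.unusedSectionVars false

open Subgroup Pointwise

section aux
variable {H : Type*} [Group H] [Finite H]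

lemma fpf_inj (φ : MulAut H) (hfpf : ∀ g : H, φ g = g → g = 1) :
    Function.Injective (fun g : H => g⁻¹ * φ g) := by
  intro x y h
  simp only at h
  have h2 : φ (y * x⁻¹) = y * x⁻¹ := by
    rw [map_mul, map_inv]
    have : y * (x⁻¹ * φ x) = y * (y⁻¹ * φ y) := by rw [h]
    rw [← mul_assoc, ← mul_assoc, mul_inv_cancel, one_mul] at this
    rw [← this]
    group
  have := hfpf _ h2
  rw [mul_inv_eq_one] at this
  exact this.symm

lemma fpf_rel_surj (φ : MulAut H) (hfpf : ∀ g : H, φ g = g → g = 1)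
    (N : Subgroup H) (hN : N.map φ.toMonoidHom = N) :
    ∀ g ∈ N, ∃ n ∈ N, n⁻¹ * φ n = g := by
  have hφN : ∀ n ∈ N, φ n ∈ N := by
    intro n hn
    rw [← hN]; exact mem_map_of_mem _ hn
  let f : N → N := fun n => ⟨(n : H)⁻¹ * φ n, mul_mem (inv_mem n.2) (hφN _ n.2)⟩
  have hfinj : Function.Injective f := by
    intro a b hab
    exact Subtype.ext (fpf_inj φ hfpf (congrArg Subtype.val hab))
  have hfsurj := Finite.surjective_of_injective hfinj
  intro g hg
  obtain ⟨n, hn⟩ := hfsurj ⟨g, hg⟩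
  exact ⟨n, n.2, congrArg Subtype.val hn⟩

lemma fpf_surj (φ : MulAut H) (hfpf : ∀ g : H, φ g = g → g = 1) (g : H) :
    ∃ x : H, x⁻¹ * φ x = g := by
  obtain ⟨n, -, hn⟩ := fpf_rel_surj φ hfpf ⊤ (by ext x; simp) g trivial
  exact ⟨n, hn⟩

end aux

section exist
variable {H : Type*} [Group H] [Finite H] {p : ℕ} [Fact p.Prime]

lemma smul_sylow_coe (ψ : MulAut H) (Q : Sylow p H) :
    ((ψ • Q : Sylow p H) : Subgroup H) = (Q : Subgroup H).map ψ.toMonoidHom := by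
  rw [Sylow.pointwise_smul_def]
  ext x
  simp [Subgroup.mem_pointwise_smul_iff_inv_smul_mem, Subgroup.mem_map]
  constructor
  · intro h; exact ⟨ψ⁻¹ x, h, by simp⟩
  · rintro ⟨y, hy, rfl⟩; simpa using hy

lemma exists_invariant_sylow (ψ : MulAut H) (hfpf : ∀ g : H, ψ g = g → g = 1) :
    ∃ S : Sylow p H, (S : Subgroup H).map ψ.toMonoidHom = S := by
  obtain ⟨Q⟩ : Nonempty (Sylow p H) := inferInstance
  obtain ⟨g, hg⟩ := MulAction.exists_smul_eq H (ψ • Q) Q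
  obtain ⟨x, hx⟩ := fpf_surj ψ hfpf g
  refine ⟨x • Q, ?_⟩
  have hψx : ψ x = x * g := by rw [← hx]; group
  have hcomm : ψ * MulAut.conj x = MulAut.conj (ψ x) * ψ := by
    ext h; simp [MulAut.conj, mul_assoc]
  have h2 : ψ • Q = (MulAut.conj g)⁻¹ • Q := by
    conv_rhs => rw [← hg, Sylow.smul_def]
    rw [inv_smul_smul]
  have h3 : MulAut.conj (ψ x) * (MulAut.conj g)⁻¹ = MulAut.conj x := by
    rw [hψx, map_mul]; group
  have key : ψ • (x • Q) = x • Q := by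
    rw [Sylow.smul_def, smul_smul, hcomm, mul_smul, h2, smul_smul, h3]
  rw [← smul_sylow_coe ψ (x • Q), key]
end exist

section uniq
variable {H : Type*} [Group H] [Finite H] {p : ℕ} [Fact p.Prime]

lemma smul_sylow_of_map_eq (φ : MulAut H) {S : Sylow p H}
    (hS : (S : Subgroup H).map φ.toMonoidHom = S) : φ • S = S :=
  Sylow.ext (by rw [smul_sylow_coe, hS])

lemma invariant_sylow_unique (φ : MulAut H) (hfpf : ∀ g : H, φ g = g → g = 1)
    (S T : Sylow p H) (hS : (S : Subgroup H).map φ.toMonoidHom = S)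
    (hT : (T : Subgroup H).map φ.toMonoidHom = T) : S = T := by
  obtain ⟨x, hx⟩ := MulAction.exists_smul_eq H S T
  have hSs := smul_sylow_of_map_eq φ hS
  have hTs := smul_sylow_of_map_eq φ hT
  have hcomm : φ * MulAut.conj x = MulAut.conj (φ x) * φ := by
    ext h; simp [MulAut.conj, mul_assoc]
  have key : (φ x) • S = T := by
    rw [← hTs, ← hx, Sylow.smul_def, Sylow.smul_def, smul_smul, hcomm, mul_smul, hSs]
  have hg : (x⁻¹ * φ x) • S = S := by
    rw [← hx] at key
    rw [Sylow.smul_def, map_mul, mul_smul, ← Sylow.smul_def, ← Sylow.smul_def, key]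
    exact inv_smul_smul x S
  have hgN : x⁻¹ * φ x ∈ Subgroup.normalizer (S : Subgroup H) :=
    Sylow.smul_eq_iff_mem_normalizer.mp hg
  have hNinv : (Subgroup.normalizer (S : Subgroup H)).map φ.toMonoidHom = Subgroup.normalizer (S : Subgroup H) := by
    rw [Subgroup.map_equiv_normalizer_eq (S : Subgroup H) (φ : H ≃* H), hS]
  obtain ⟨n, hnN, hn⟩ := fpf_rel_surj φ hfpf _ hNinv _ hgN
  have : n = x := fpf_inj φ hfpf hn
  subst this
  rw [← hx, Sylow.smul_eq_iff_mem_normalizer.mpr hnN]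
end uniq

/-- If `φ` is a fixed-point-free automorphism of a finite group `G` and `S`
is the `φ`-invariant Sylow `p`-subgroup of `G`, then every `φ`-invariant
`p`-subgroup of `G` is contained in `S`. -/
theorem invariant_pSubgroup_le_invariant_sylow (G : Type*) [Group G] [Finite G]
    (p : ℕ) [Fact p.Prime]
    (φ : MulAut G) (hfpf : ∀ g : G, φ g = g → g = 1)
    (S : Sylow p G) (hS : (S : Subgroup G).map (φ : G ≃* G).toMonoidHom = S)
    (P : Subgroup G) (hP : IsPGroup p P)
    (hPinv : P.map (φ : G ≃* G).toMonoidHom = P) :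
    P ≤ S := by
  classical
  set s : Set (Subgroup G) :=
    {T | IsPGroup p T ∧ T.map (φ : G ≃* G).toMonoidHom = T ∧ P ≤ T} with hs
  obtain ⟨T, hTs, hTmax⟩ :=
    Set.Finite.exists_maximalFor id s (Set.toFinite s) ⟨P, hP, hPinv, le_rfl⟩
  obtain ⟨hTp, hTinv, hPT⟩ := hTs
  set N : Subgroup G := Subgroup.normalizer (T : Subgroup G) with hNdef
  have hTN : T ≤ N := Subgroup.le_normalizer
  have hNinv : N.map (φ : G ≃* G).toMonoidHom = N := by
    rw [hNdef, Subgroup.map_equiv_normalizer_eq T (φ : G ≃* G), hTinv]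
  -- induced automorphism on N
  let e : ↥N ≃* ↥N := ((φ : G ≃* G).subgroupMap N).trans (MulEquiv.subgroupCongr hNinv)
  have he : ∀ n : ↥N, ((e n : ↥N) : G) = φ (n : G) := fun n => rfl
  have hefpf : ∀ n : ↥N, e n = n → n = 1 := by
    intro n hn
    have : φ (n : G) = (n : G) := by rw [← he n, hn]
    exact Subtype.ext (hfpf _ this)
  obtain ⟨R, hR⟩ := exists_invariant_sylow (p := p) (H := ↥N) e hefpf
  -- the image of R in G
  set T' : Subgroup G := (R : Subgroup ↥N).map N.subtype with hT'def
  have hsub_comp : N.subtype.comp e.toMonoidHom = ((φ : G ≃* G).toMonoidHom).comp N.subtype := by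
    ext n; exact he n
  have hT'inv : T'.map (φ : G ≃* G).toMonoidHom = T' := by
    rw [hT'def, Subgroup.map_map, ← hsub_comp, ← Subgroup.map_map, hR]
  have hT'p : IsPGroup p T' := R.isPGroup'.map N.subtype
  -- T is contained in T'
  have hRA : (R : Subgroup ↥N) = T.subgroupOf N := by
    -- T.subgroupOf N is a normal p-subgroup of N, hence contained in every Sylow;
    -- maximality of T then gives equality after mapping down.
    have hA_p : IsPGroup p (T.subgroupOf N) :=
      hTp.of_equiv (Subgroup.subgroupOfEquivOfLe hTN).symm
    obtain ⟨R₀, hAR₀⟩ := hA_p.exists_le_sylow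
    obtain ⟨n, hn⟩ := MulAction.exists_smul_eq (↥N) R₀ R
    haveI : (T.subgroupOf N).Normal := Subgroup.normal_in_normalizer
    have hAR : T.subgroupOf N ≤ R := by
      calc T.subgroupOf N = MulAut.conj n • T.subgroupOf N :=
            (Subgroup.Normal.conj_smul_eq_self n _).symm
        _ ≤ MulAut.conj n • (R₀ : Subgroup ↥N) := by
            exact Subgroup.pointwise_smul_le_pointwise_smul_iff.mpr hAR₀
        _ = R := by rw [← Sylow.coe_subgroup_smul, hn]
    have hTT' : T ≤ T' := by
      have := Subgroup.map_mono (f := N.subtype) hAR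
      rwa [Subgroup.subgroupOf_map_subtype, inf_eq_left.mpr hTN] at this
    have hTeq : T = T' := le_antisymm hTT' (hTmax ⟨hT'p, hT'inv, hPT.trans hTT'⟩ hTT')
    apply Subgroup.map_injective N.subtype_injective
    rw [Subgroup.subgroupOf_map_subtype, inf_eq_left.mpr hTN, ← hT'def, ← hTeq]
  -- T is a Sylow subgroup of G
  have hmax : ∀ {Q : Subgroup G}, IsPGroup p Q → T ≤ Q → Q = T := by
    intro Q hQ hTQ
    obtain ⟨Q', hQQ'⟩ := hQ.exists_le_sylow
    suffices h : (Q' : Subgroup G) = T by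
      exact le_antisymm (hQQ'.trans h.le) hTQ
    by_contra hne
    have hTQ' : T ≤ Q' := hTQ.trans hQQ'
    -- normalizer growth inside the p-group Q'
    have hA'top : T.subgroupOf (Q' : Subgroup G) ≠ ⊤ := by
      intro h
      exact hne (le_antisymm (Subgroup.subgroupOf_eq_top.mp h) hTQ')
    haveI : Group.IsNilpotent ↥(Q' : Subgroup G) := Q'.isPGroup'.isNilpotent
    have hnc := normalizerCondition_of_isNilpotent (G := ↥(Q' : Subgroup G))
      (T.subgroupOf Q') (lt_top_iff_ne_top.mpr hA'top)
    obtain ⟨q, hqn, hqA⟩ := SetLike.exists_of_lt hnc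
    have hqT : (q : G) ∉ T := fun h => hqA (Subgroup.mem_subgroupOf.mpr h)
    have hqN : (q : G) ∈ N := by
      rw [hNdef, Subgroup.mem_normalizer_iff]
      intro h
      have hiff := Subgroup.mem_normalizer_iff.mp hqn
      constructor
      · intro hhT
        have hhQ' : h ∈ (Q' : Subgroup G) := hTQ' hhT
        have := (hiff ⟨h, hhQ'⟩).mp (Subgroup.mem_subgroupOf.mpr hhT)
        exact Subgroup.mem_subgroupOf.mp this
      · intro hconj
        have hconjQ' : (q : G) * h * (q : G)⁻¹ ∈ (Q' : Subgroup G) := hTQ' hconj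
        have hhQ' : h ∈ (Q' : Subgroup G) := by
          have : (q : G)⁻¹ * ((q : G) * h * (q : G)⁻¹) * (q : G) ∈ (Q' : Subgroup G) :=
            mul_mem (mul_mem (inv_mem q.2) hconjQ') q.2
          simpa [mul_assoc] using this
        have : ((⟨(q : G) * h * (q : G)⁻¹, hconjQ'⟩ : ↥(Q' : Subgroup G))) ∈
            T.subgroupOf Q' := Subgroup.mem_subgroupOf.mpr hconj
        have h2 : (⟨h, hhQ'⟩ : ↥(Q' : Subgroup G)) ∈ T.subgroupOf Q' := by
          apply (hiff ⟨h, hhQ'⟩).mpr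
          convert this using 2
          rfl
        exact Subgroup.mem_subgroupOf.mp h2
    -- contradiction with R being Sylow in N
    set D : Subgroup G := (Q' : Subgroup G) ⊓ N with hD
    have hDp : IsPGroup p D := Q'.isPGroup'.to_le inf_le_left
    have hBp : IsPGroup p (D.subgroupOf N) :=
      hDp.of_equiv (Subgroup.subgroupOfEquivOfLe inf_le_right).symm
    have hRB : (R : Subgroup ↥N) ≤ D.subgroupOf N := by
      rw [hRA]
      exact Subgroup.comap_mono (le_inf hTQ' hTN)
    have hBR := R.3 hBp hRB
    have hqB : (⟨(q : G), hqN⟩ : ↥N) ∈ D.subgroupOf N :=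
      Subgroup.mem_subgroupOf.mpr (Subgroup.mem_inf.mpr ⟨q.2, hqN⟩)
    rw [hBR, hRA] at hqB
    exact hqT (Subgroup.mem_subgroupOf.mp hqB)
  have hSyl : S = ⟨T, hTp, hmax⟩ :=
    invariant_sylow_unique φ hfpf S ⟨T, hTp, hmax⟩ hS hTinv
  have : (S : Subgroup G) = T := by rw [hSyl]
  rw [this]
  exact hPT
end
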